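/- Let B_0, ..., B_{m-1} be positive semidefinite symmetric bilinear forms on R^q, each with all eigenvalues in [0,1], such that the sum of all their traces equals mp for an integer p ≤ q. Let B = B_0 + ... + B_{m-1}, with eigenvalues η_1, ..., η_q ∈ [0, m] satisfying η_1 + ... + η_q = mp. Then for m ≥ 3, the function F(η_1,...,η_q) = ∫_{S^{q-1}} (Σ_j η_j x_j²)^{m/2} dx (integration over the unit sphere with invariant measure, in coordinates diagonalizing B) satisfies F(η_1,...,η_q) ≤ F(m,...,m,0,...,0) where m appears p times. -/

import Mathlib

open MeasureTheory
open scoped Classical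
set_option maxHeartbeats 1000000

section Aux

variable {q : ℕ} (μ : Measure (EuclideanSpace ℝ (Fin q))) [IsFiniteMeasure μ]

/-- The functional `F`. -/
noncomputable def Fint (r : ℝ) (η : Fin q → ℝ) : ℝ :=
  ∫ x, (∑ j, η j * (x j) ^ 2) ^ r ∂μ

lemma cont_integrand (r : ℝ) (hr : 0 ≤ r) (η : Fin q → ℝ) :
    Continuous (fun x : EuclideanSpace ℝ (Fin q) => (∑ j, η j * (x j) ^ 2) ^ r) := by
  apply Continuous.rpow_const
  · exact continuous_finset_sum _ fun j _ =>
      continuous_const.mul ((PiLp.continuous_apply 2 _ j).pow 2)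
  · exact fun _ => Or.inr hr

lemma ae_sum_sq (hsphere : μ (Metric.sphere (0 : EuclideanSpace ℝ (Fin q)) 1)ᶜ = 0) :
    ∀ᵐ x ∂μ, ∑ j, (x j) ^ 2 = 1 := by
  have h : ∀ᵐ x ∂μ, x ∈ Metric.sphere (0 : EuclideanSpace ℝ (Fin q)) 1 :=
    ae_iff.2 hsphere
  filter_upwards [h] with x hx
  have hn : ‖x‖ = 1 := by simpa using hx
  have : ∑ j, (x j)^2 = ‖x‖^2 := by
    rw [EuclideanSpace.norm_eq, Real.sq_sqrt (by positivity)]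
    simp [sq_abs]
  rw [this, hn]; norm_num

lemma integrable_F {M r : ℝ} (hr : 0 ≤ r) (hM : 0 ≤ M)
    (hsphere : μ (Metric.sphere (0 : EuclideanSpace ℝ (Fin q)) 1)ᶜ = 0)
    (η : Fin q → ℝ) (hη : ∀ j, 0 ≤ η j ∧ η j ≤ M) :
    Integrable (fun x : EuclideanSpace ℝ (Fin q) => (∑ j, η j * (x j) ^ 2) ^ r) μ := by
  refine (integrable_const (M ^ r)).mono'
    ((cont_integrand r hr η).aestronglyMeasurable) ?_
  filter_upwards [ae_sum_sq μ hsphere] with x hx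
  have h0 : (0:ℝ) ≤ ∑ j, η j * (x j) ^ 2 :=
    Finset.sum_nonneg fun j _ => mul_nonneg (hη j).1 (sq_nonneg _)
  have h1 : ∑ j, η j * (x j) ^ 2 ≤ M := by
    calc ∑ j, η j * (x j) ^ 2 ≤ ∑ j, M * (x j) ^ 2 :=
          Finset.sum_le_sum fun j _ => mul_le_mul_of_nonneg_right (hη j).2 (sq_nonneg _)
      _ = M := by rw [← Finset.mul_sum, hx, mul_one]
  rw [Real.norm_eq_abs, abs_of_nonneg (Real.rpow_nonneg h0 r)]
  exact Real.rpow_le_rpow h0 h1 hr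

/-- Convexity of `F`. -/
lemma Fint_combo {M r a b : ℝ} (hr : 1 ≤ r) (hM : 0 ≤ M) (ha : 0 ≤ a) (hb : 0 ≤ b)
    (hab : a + b = 1)
    (hsphere : μ (Metric.sphere (0 : EuclideanSpace ℝ (Fin q)) 1)ᶜ = 0)
    (η₁ η₂ : Fin q → ℝ) (h₁ : ∀ j, 0 ≤ η₁ j ∧ η₁ j ≤ M) (h₂ : ∀ j, 0 ≤ η₂ j ∧ η₂ j ≤ M) :
    Fint μ r (fun j => a * η₁ j + b * η₂ j) ≤ a * Fint μ r η₁ + b * Fint μ r η₂ := by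
  have hr0 : (0:ℝ) ≤ r := le_trans zero_le_one hr
  have hcomb : ∀ j, 0 ≤ a * η₁ j + b * η₂ j ∧ a * η₁ j + b * η₂ j ≤ M := by
    intro j
    constructor
    · nlinarith [(h₁ j).1, (h₂ j).1]
    · nlinarith [(h₁ j).1, (h₁ j).2, (h₂ j).1, (h₂ j).2]
  have hpt : ∀ x : EuclideanSpace ℝ (Fin q),
      (∑ j, (a * η₁ j + b * η₂ j) * (x j) ^ 2) ^ r
        ≤ a * (∑ j, η₁ j * (x j) ^ 2) ^ r + b * (∑ j, η₂ j * (x j) ^ 2) ^ r := by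
    intro x
    have hsum : ∑ j, (a * η₁ j + b * η₂ j) * (x j) ^ 2
        = a * (∑ j, η₁ j * (x j) ^ 2) + b * (∑ j, η₂ j * (x j) ^ 2) := by
      rw [Finset.mul_sum, Finset.mul_sum, ← Finset.sum_add_distrib]
      exact Finset.sum_congr rfl fun j _ => by ring
    rw [hsum]
    have hu : (0:ℝ) ≤ ∑ j, η₁ j * (x j) ^ 2 :=
      Finset.sum_nonneg fun j _ => mul_nonneg (h₁ j).1 (sq_nonneg _)
    have hv : (0:ℝ) ≤ ∑ j, η₂ j * (x j) ^ 2 :=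
      Finset.sum_nonneg fun j _ => mul_nonneg (h₂ j).1 (sq_nonneg _)
    have := (convexOn_rpow hr).2 (Set.mem_Ici.mpr hu) (Set.mem_Ici.mpr hv) ha hb hab
    simpa [smul_eq_mul] using this
  have i₁ := integrable_F μ hr0 hM hsphere η₁ h₁
  have i₂ := integrable_F μ hr0 hM hsphere η₂ h₂
  have i₀ := integrable_F μ hr0 hM hsphere _ hcomb
  calc Fint μ r (fun j => a * η₁ j + b * η₂ j)
      ≤ ∫ x, (a * (∑ j, η₁ j * (x j) ^ 2) ^ r + b * (∑ j, η₂ j * (x j) ^ 2) ^ r) ∂μ :=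
        integral_mono i₀ ((i₁.const_mul a).add (i₂.const_mul b)) hpt
    _ = a * Fint μ r η₁ + b * Fint μ r η₂ := by
        rw [integral_add (i₁.const_mul a) (i₂.const_mul b), MeasureTheory.integral_const_mul,
          MeasureTheory.integral_const_mul]
        rfl


/-- Permutation invariance of `F`. -/
lemma Fint_perm (r : ℝ) (hr : 0 ≤ r)
    (hinv : ∀ g : EuclideanSpace ℝ (Fin q) ≃ₗᵢ[ℝ] EuclideanSpace ℝ (Fin q), μ.map g = μ)
    (σ : Equiv.Perm (Fin q)) (η : Fin q → ℝ) :
    Fint μ r (fun j => η (σ j)) = Fint μ r η := by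
  set g := LinearIsometryEquiv.piLpCongrLeft 2 ℝ ℝ σ with hgdef
  have hg : ∀ (x : EuclideanSpace ℝ (Fin q)) j, g x j = x (σ.symm j) := by
    intro x j
    simp [hgdef, LinearIsometryEquiv.piLpCongrLeft_apply, Equiv.piCongrLeft']
  have hmeas : AEStronglyMeasurable
      (fun x : EuclideanSpace ℝ (Fin q) => (∑ j, η j * (x j) ^ 2) ^ r) (μ.map g) :=
    (cont_integrand r hr η).aestronglyMeasurable
  symm
  calc Fint μ r η = ∫ x, (∑ j, η j * (x j) ^ 2) ^ r ∂(μ.map g) := by rw [hinv g]; rfl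
    _ = ∫ x, (∑ j, η j * ((g x) j) ^ 2) ^ r ∂μ :=
        integral_map g.continuous.aemeasurable hmeas
    _ = Fint μ r (fun j => η (σ j)) := by
        unfold Fint
        congr 1
        funext x
        congr 1
        rw [Finset.sum_congr rfl (fun j _ => by rw [hg x j])]
        exact (Fintype.sum_equiv σ (fun j => η (σ j) * (x j) ^ 2)
          (fun j => η j * (x (σ.symm j)) ^ 2) (fun i => by dsimp only; rw [show (Equiv.symm σ) (σ i) = i from σ.symm_apply_apply i])).symm

lemma card_filter_lt {p : ℕ} (hp : p ≤ q) :
    (Finset.univ.filter (fun j : Fin q => (j : ℕ) < p)).card = p := by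
  refine Finset.card_eq_of_bijective (fun i h => ⟨i, lt_of_lt_of_le h hp⟩) ?_ ?_ ?_
  · intro a ha
    exact ⟨a, (Finset.mem_filter.1 ha).2, rfl⟩
  · intro i h
    exact Finset.mem_filter.2 ⟨Finset.mem_univ _, h⟩
  · intro i j hi hj hij
    simpa using congrArg Fin.val hij

lemma subtypeCongr_pos {α} {P Q : α → Prop} [DecidablePred P] [DecidablePred Q]
    (e : {x // P x} ≃ {x // Q x}) (f : {x // ¬P x} ≃ {x // ¬Q x}) (a : α) (h : P a) :
    Equiv.subtypeCongr e f a = (e ⟨a, h⟩ : {x // Q x}) := by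
  simp [Equiv.subtypeCongr, h]

lemma subtypeCongr_neg {α} {P Q : α → Prop} [DecidablePred P] [DecidablePred Q]
    (e : {x // P x} ≃ {x // Q x}) (f : {x // ¬P x} ≃ {x // ¬Q x}) (a : α) (h : ¬P a) :
    Equiv.subtypeCongr e f a = (f ⟨a, h⟩ : {x // ¬Q x}) := by
  simp [Equiv.subtypeCongr, h]

/-- Base case: a `{0,m}`-valued vector with sum `m·p` gives the same value as the target. -/
lemma Fint_base (m p : ℕ) (hm : 0 < m) (hp : p ≤ q) (r : ℝ) (hr : 0 ≤ r)
    (hinv : ∀ g : EuclideanSpace ℝ (Fin q) ≃ₗᵢ[ℝ] EuclideanSpace ℝ (Fin q), μ.map g = μ)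
    (η : Fin q → ℝ) (hval : ∀ j, η j = 0 ∨ η j = m)
    (hsum : ∑ j, η j = m * p) :
    Fint μ r η = Fint μ r (fun j => if (j : ℕ) < p then (m : ℝ) else 0) := by
  have hcard : (Finset.univ.filter (fun j => η j = (m : ℝ))).card = p := by
    have hs : ∑ j, η j
        = (m : ℝ) * (Finset.univ.filter (fun j => η j = (m : ℝ))).card := by
      rw [← Finset.sum_filter_add_sum_filter_not Finset.univ (fun j => η j = (m : ℝ))]
      have h1 : ∑ j ∈ Finset.univ.filter (fun j => η j = (m : ℝ)), η j
          = (m : ℝ) * (Finset.univ.filter (fun j => η j = (m : ℝ))).card := by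
        rw [Finset.sum_congr rfl (fun j hj => (Finset.mem_filter.1 hj).2),
          Finset.sum_const, nsmul_eq_mul, mul_comm]
      have h2 : ∑ j ∈ Finset.univ.filter (fun j => ¬ η j = (m : ℝ)), η j = 0 :=
        Finset.sum_eq_zero fun j hj => (hval j).resolve_right (Finset.mem_filter.1 hj).2
      rw [h1, h2, add_zero]
    have hm' : ((m : ℝ)) ≠ 0 := Nat.cast_ne_zero.2 hm.ne'
    have h3 : (m : ℝ) * ((Finset.univ.filter (fun j => η j = (m : ℝ))).card : ℝ)
        = (m : ℝ) * (p : ℝ) := hs.symm.trans hsum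
    exact_mod_cast mul_left_cancel₀ hm' h3
  have hc1 : Fintype.card {j : Fin q // η j = (m : ℝ)}
      = Fintype.card {j : Fin q // (j : ℕ) < p} := by
    rw [Fintype.card_subtype, Fintype.card_subtype, hcard, card_filter_lt hp]
  have hc2 : Fintype.card {j : Fin q // ¬ η j = (m : ℝ)}
      = Fintype.card {j : Fin q // ¬ (j : ℕ) < p} := by
    rw [Fintype.card_subtype_compl, Fintype.card_subtype_compl, hc1]
  set e := Fintype.equivOfCardEq hc1 with he
  set f := Fintype.equivOfCardEq hc2 with hf
  set σ : Equiv.Perm (Fin q) := Equiv.subtypeCongr e f with hσdef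
  have hσ : ∀ j, (if ((σ j : Fin q) : ℕ) < p then (m : ℝ) else 0) = η j := by
    intro j
    by_cases h : η j = (m : ℝ)
    · have h1 : σ j = ((e ⟨j, h⟩ : {j : Fin q // (j : ℕ) < p}) : Fin q) :=
        subtypeCongr_pos e f j h
      rw [h1, if_pos (e ⟨j, h⟩).2, h]
    · have h1 : σ j = ((f ⟨j, h⟩ : {j : Fin q // ¬ (j : ℕ) < p}) : Fin q) :=
        subtypeCongr_neg e f j h
      rw [h1, if_neg (f ⟨j, h⟩).2, ((hval j).resolve_right h)]
  calc Fint μ r η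
      = Fint μ r (fun j => if ((σ j : Fin q) : ℕ) < p then (m : ℝ) else 0) := by
        unfold Fint
        congr 1
        funext x
        congr 1
        exact Finset.sum_congr rfl fun j _ => by dsimp only; rw [hσ j]
    _ = Fint μ r (fun j => if (j : ℕ) < p then (m : ℝ) else 0) :=
        Fint_perm μ r hr hinv σ (fun j => if (j : ℕ) < p then (m : ℝ) else 0)


lemma sum_of_mem (m : ℕ) (s : Finset (Fin q)) (η : Fin q → ℝ)
    (h : ∀ j ∈ s, η j = 0 ∨ η j = (m : ℝ)) :
    ∑ j ∈ s, η j = (m : ℝ) * (s.filter (fun j => η j = (m : ℝ))).card := by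
  rw [← Finset.sum_filter_add_sum_filter_not s (fun j => η j = (m : ℝ))]
  have h1 : ∑ j ∈ s.filter (fun j => η j = (m : ℝ)), η j
      = (m : ℝ) * (s.filter (fun j => η j = (m : ℝ))).card := by
    rw [Finset.sum_congr rfl (fun j hj => (Finset.mem_filter.1 hj).2),
      Finset.sum_const, nsmul_eq_mul, mul_comm]
  have h2 : ∑ j ∈ s.filter (fun j => ¬ η j = (m : ℝ)), η j = 0 :=
    Finset.sum_eq_zero fun j hj => (h j (Finset.mem_filter.1 hj).1).resolve_right
      (Finset.mem_filter.1 hj).2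
  rw [h1, h2, add_zero]

lemma key_induction (m p : ℕ) (hm : 3 ≤ m) (hp : p ≤ q)
    (hinv : ∀ g : EuclideanSpace ℝ (Fin q) ≃ₗᵢ[ℝ] EuclideanSpace ℝ (Fin q), μ.map g = μ)
    (hsphere : μ (Metric.sphere (0 : EuclideanSpace ℝ (Fin q)) 1)ᶜ = 0) :
    ∀ n (η : Fin q → ℝ),
      (Finset.univ.filter (fun j => η j ≠ 0 ∧ η j ≠ (m : ℝ))).card ≤ n →
      (∀ j, η j ∈ Set.Icc (0 : ℝ) m) → ∑ j, η j = m * p →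
      Fint μ ((m : ℝ) / 2) η
        ≤ Fint μ ((m : ℝ) / 2) (fun j => if (j : ℕ) < p then (m : ℝ) else 0) := by
  have hm3 : (3 : ℝ) ≤ (m : ℝ) := by exact_mod_cast hm
  have hr1 : (1 : ℝ) ≤ (m : ℝ) / 2 := by linarith
  have hr0 : (0 : ℝ) ≤ (m : ℝ) / 2 := le_trans zero_le_one hr1
  have hmR : (0 : ℝ) ≤ (m : ℝ) := by linarith
  intro n
  induction n with
  | zero =>
    intro η hcount hη hsum
    have hval : ∀ j, η j = 0 ∨ η j = (m : ℝ) := by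
      intro j
      by_contra hcon
      push_neg at hcon
      have hjm : j ∈ Finset.univ.filter (fun j => η j ≠ 0 ∧ η j ≠ (m : ℝ)) :=
        Finset.mem_filter.2 ⟨Finset.mem_univ _, hcon⟩
      have : (Finset.univ.filter (fun j => η j ≠ 0 ∧ η j ≠ (m : ℝ))).card = 0 :=
        Nat.le_zero.1 hcount
      rw [Finset.card_eq_zero] at this
      simp [this] at hjm
    exact le_of_eq (Fint_base μ m p (by omega) hp _ hr0 hinv η hval hsum)
  | succ n ih =>
    intro η hcount hη hsum
    by_cases hc : (Finset.univ.filter (fun j => η j ≠ 0 ∧ η j ≠ (m : ℝ))).card ≤ n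
    · exact ih η hc hη hsum
    have hpos : 0 < (Finset.univ.filter (fun j => η j ≠ 0 ∧ η j ≠ (m : ℝ))).card := by omega
    obtain ⟨i, hi⟩ := Finset.card_pos.1 hpos
    have hi' : η i ≠ 0 ∧ η i ≠ (m : ℝ) := (Finset.mem_filter.1 hi).2
    have hi0 : 0 < η i := lt_of_le_of_ne (hη i).1 (Ne.symm hi'.1)
    have him : η i < (m : ℝ) := lt_of_le_of_ne (hη i).2 hi'.2
    -- find a second fractional index
    have hex : ∃ k, k ≠ i ∧ η k ≠ 0 ∧ η k ≠ (m : ℝ) := by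
      by_contra hcon
      push_neg at hcon
      have hval : ∀ k ∈ Finset.univ.erase i, η k = 0 ∨ η k = (m : ℝ) := by
        intro k hk
        have hki : k ≠ i := (Finset.mem_erase.1 hk).1
        rcases Classical.em (η k = 0) with h | h
        · exact Or.inl h
        · exact Or.inr (hcon k hki h)
      have hsplit : η i + ∑ j ∈ Finset.univ.erase i, η j = ∑ j, η j :=
        Finset.add_sum_erase _ _ (Finset.mem_univ i)
      rw [sum_of_mem m _ η hval] at hsplit
      set t := ((Finset.univ.erase i).filter (fun j => η j = (m : ℝ))).card with ht
      have hηi : η i = (m : ℝ) * ((p : ℝ) - (t : ℝ)) := by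
        rw [hsum] at hsplit; linarith [hsplit]
      have h1 : (t : ℝ) < (p : ℝ) := by nlinarith
      have h2 : (p : ℝ) < (t : ℝ) + 1 := by nlinarith
      have h1' : t < p := by exact_mod_cast h1
      have h2' : p < t + 1 := by exact_mod_cast h2
      omega
    obtain ⟨k, hki, hk0', hkm'⟩ := hex
    have hk0 : 0 < η k := lt_of_le_of_ne (hη k).1 (Ne.symm hk0')
    have hkm : η k < (m : ℝ) := lt_of_le_of_ne (hη k).2 hkm'
    have hik : i ≠ k := fun h => hki h.symm
    set c := min ((m : ℝ) - η i) (η k) with hcdef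
    set d := min (η i) ((m : ℝ) - η k) with hddef
    have hcpos : 0 < c := lt_min (by linarith) hk0
    have hdpos : 0 < d := lt_min hi0 (by linarith)
    have hcd : c + d ≠ 0 := by positivity
    set ηp : Fin q → ℝ := fun j => if j = i then η i + c else if j = k then η k - c else η j
      with hηp
    set ηm : Fin q → ℝ := fun j => if j = i then η i - d else if j = k then η k + d else η j
      with hηm
    set a := d / (c + d) with hadef
    set b := c / (c + d) with hbdef
    have ha : 0 ≤ a := by positivity
    have hb : 0 ≤ b := by positivity
    have hab : a + b = 1 := by rw [hadef, hbdef, ← add_div, add_comm d c, div_self hcd]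
    have hpi : ηp i = η i + c := by rw [hηp]; simp
    have hpk : ηp k = η k - c := by rw [hηp]; simp [hki]
    have hpo : ∀ j, j ≠ i → j ≠ k → ηp j = η j := by
      intro j h1 h2; rw [hηp]; simp [h1, h2]
    have hmi : ηm i = η i - d := by rw [hηm]; simp
    have hmk : ηm k = η k + d := by rw [hηm]; simp [hki]
    have hmo : ∀ j, j ≠ i → j ≠ k → ηm j = η j := by
      intro j h1 h2; rw [hηm]; simp [h1, h2]
    have hcomb : ∀ j, a * ηp j + b * ηm j = η j := by
      intro j
      by_cases h1 : j = i
      · subst h1; rw [hpi, hmi, hadef, hbdef]; field_simp; ring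
      by_cases h2 : j = k
      · subst h2; rw [hpk, hmk, hadef, hbdef]; field_simp; ring
      · rw [hpo j h1 h2, hmo j h1 h2, ← add_mul, hab, one_mul]
    have hηpB : ∀ j, 0 ≤ ηp j ∧ ηp j ≤ (m : ℝ) := by
      intro j
      by_cases h1 : j = i
      · rw [h1, hpi]
        have h3 : c ≤ (m : ℝ) - η i := min_le_left _ _
        constructor <;> linarith
      by_cases h2 : j = k
      · rw [h2, hpk]
        have h3 : c ≤ η k := min_le_right _ _
        constructor <;> linarith
      · rw [hpo j h1 h2]; exact ⟨(hη j).1, (hη j).2⟩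
    have hηmB : ∀ j, 0 ≤ ηm j ∧ ηm j ≤ (m : ℝ) := by
      intro j
      by_cases h1 : j = i
      · rw [h1, hmi]
        have h3 : d ≤ η i := min_le_left _ _
        constructor <;> linarith
      by_cases h2 : j = k
      · rw [h2, hmk]
        have h3 : d ≤ (m : ℝ) - η k := min_le_right _ _
        constructor <;> linarith
      · rw [hmo j h1 h2]; exact ⟨(hη j).1, (hη j).2⟩
    have hsump : ∑ j, ηp j = m * p := by
      have heq : ∀ j, ηp j = η j + (if j = i then c else 0) - (if j = k then c else 0) := by
        intro j
        by_cases h1 : j = i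
        · rw [h1, hpi, if_pos rfl, if_neg hik]; ring
        by_cases h2 : j = k
        · rw [h2, hpk, if_neg (h2 ▸ h1), if_pos rfl]; ring
        · rw [hpo j h1 h2, if_neg h1, if_neg h2]; ring
      rw [Finset.sum_congr rfl (fun j _ => heq j), Finset.sum_sub_distrib,
        Finset.sum_add_distrib, Finset.sum_ite_eq' Finset.univ i (fun _ => c),
        Finset.sum_ite_eq' Finset.univ k (fun _ => c)]
      simp only [Finset.mem_univ, if_pos]
      rw [hsum]; ring
    have hsumm : ∑ j, ηm j = m * p := by
      have heq : ∀ j, ηm j = η j - (if j = i then d else 0) + (if j = k then d else 0) := by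
        intro j
        by_cases h1 : j = i
        · rw [h1, hmi, if_pos rfl, if_neg hik]; ring
        by_cases h2 : j = k
        · rw [h2, hmk, if_neg (h2 ▸ h1), if_pos rfl]; ring
        · rw [hmo j h1 h2, if_neg h1, if_neg h2]; ring
      rw [Finset.sum_congr rfl (fun j _ => heq j), Finset.sum_add_distrib,
        Finset.sum_sub_distrib, Finset.sum_ite_eq' Finset.univ i (fun _ => d),
        Finset.sum_ite_eq' Finset.univ k (fun _ => d)]
      simp only [Finset.mem_univ, if_pos]
      rw [hsum]; ring
    have hkmem : k ∈ Finset.univ.filter (fun j => η j ≠ 0 ∧ η j ≠ (m : ℝ)) :=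
      Finset.mem_filter.2 ⟨Finset.mem_univ _, hk0', hkm'⟩
    have hsubp : Finset.univ.filter (fun j => ηp j ≠ 0 ∧ ηp j ≠ (m : ℝ))
        ⊆ Finset.univ.filter (fun j => η j ≠ 0 ∧ η j ≠ (m : ℝ)) := by
      intro j hj
      have hj' := (Finset.mem_filter.1 hj).2
      by_cases h1 : j = i
      · exact h1 ▸ hi
      by_cases h2 : j = k
      · exact h2 ▸ hkmem
      · rw [hpo j h1 h2] at hj'
        exact Finset.mem_filter.2 ⟨Finset.mem_univ _, hj'⟩
    have hwitp : ∃ w ∈ Finset.univ.filter (fun j => η j ≠ 0 ∧ η j ≠ (m : ℝ)),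
        w ∉ Finset.univ.filter (fun j => ηp j ≠ 0 ∧ ηp j ≠ (m : ℝ)) := by
      by_cases hmin : (m : ℝ) - η i ≤ η k
      · refine ⟨i, hi, fun hmem => ?_⟩
        exact (Finset.mem_filter.1 hmem).2.2 (by rw [hpi, hcdef, min_eq_left hmin]; ring)
      · refine ⟨k, hkmem, fun hmem => ?_⟩
        exact (Finset.mem_filter.1 hmem).2.1
          (by rw [hpk, hcdef, min_eq_right (le_of_not_ge hmin)]; ring)
    have hcardp : (Finset.univ.filter (fun j => ηp j ≠ 0 ∧ ηp j ≠ (m : ℝ))).card ≤ n := by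
      have := Finset.card_lt_card ((Finset.ssubset_iff_of_subset hsubp).2 hwitp)
      omega
    have hsubm : Finset.univ.filter (fun j => ηm j ≠ 0 ∧ ηm j ≠ (m : ℝ))
        ⊆ Finset.univ.filter (fun j => η j ≠ 0 ∧ η j ≠ (m : ℝ)) := by
      intro j hj
      have hj' := (Finset.mem_filter.1 hj).2
      by_cases h1 : j = i
      · exact h1 ▸ hi
      by_cases h2 : j = k
      · exact h2 ▸ hkmem
      · rw [hmo j h1 h2] at hj'
        exact Finset.mem_filter.2 ⟨Finset.mem_univ _, hj'⟩
    have hwitm : ∃ w ∈ Finset.univ.filter (fun j => η j ≠ 0 ∧ η j ≠ (m : ℝ)),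
        w ∉ Finset.univ.filter (fun j => ηm j ≠ 0 ∧ ηm j ≠ (m : ℝ)) := by
      by_cases hmin : η i ≤ (m : ℝ) - η k
      · refine ⟨i, hi, fun hmem => ?_⟩
        exact (Finset.mem_filter.1 hmem).2.1 (by rw [hmi, hddef, min_eq_left hmin]; ring)
      · refine ⟨k, hkmem, fun hmem => ?_⟩
        exact (Finset.mem_filter.1 hmem).2.2
          (by rw [hmk, hddef, min_eq_right (le_of_not_ge hmin)]; ring)
    have hcardm : (Finset.univ.filter (fun j => ηm j ≠ 0 ∧ ηm j ≠ (m : ℝ))).card ≤ n := by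
      have := Finset.card_lt_card ((Finset.ssubset_iff_of_subset hsubm).2 hwitm)
      omega
    have hFp := ih ηp hcardp (fun j => Set.mem_Icc.2 (hηpB j)) hsump
    have hFm := ih ηm hcardm (fun j => Set.mem_Icc.2 (hηmB j)) hsumm
    have hstep : Fint μ ((m : ℝ) / 2) η
        = Fint μ ((m : ℝ) / 2) (fun j => a * ηp j + b * ηm j) := by
      unfold Fint
      congr 1
      funext x
      congr 1
      exact Finset.sum_congr rfl fun j _ => by dsimp only; rw [hcomb j]
    rw [hstep]
    have h1 := Fint_combo μ hr1 hmR ha hb hab hsphere ηp ηm hηpB hηmB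
    refine le_trans h1 ?_
    calc a * Fint μ ((m : ℝ) / 2) ηp + b * Fint μ ((m : ℝ) / 2) ηm
        ≤ a * Fint μ ((m : ℝ) / 2) (fun j => if (j : ℕ) < p then (m : ℝ) else 0)
          + b * Fint μ ((m : ℝ) / 2) (fun j => if (j : ℕ) < p then (m : ℝ) else 0) :=
          add_le_add (mul_le_mul_of_nonneg_left hFp ha) (mul_le_mul_of_nonneg_left hFm hb)
      _ = Fint μ ((m : ℝ) / 2) (fun j => if (j : ℕ) < p then (m : ℝ) else 0) := by
          rw [← add_mul, hab, one_mul]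

end Aux

/-- Let `η₁, …, η_q ∈ [0,m]` with `Σ η_j = m·p` (as arises from the eigenvalues
of a sum `B = B₀ + ⋯ + B_{m-1}` of positive semidefinite forms with eigenvalues in `[0,1]`
and total trace `m·p`), `p ≤ q`, `m ≥ 3`. Then for the rotation-invariant measure on
`S^{q-1}`, `F(η) = ∫ (Σ_j η_j x_j²)^{m/2} dx` satisfies
`F(η) ≤ F(m,…,m,0,…,0)` (with `m` appearing `p` times). -/
theorem stmt_3 (m p q : ℕ) (hm : 3 ≤ m) (hp : p ≤ q)
    (η : Fin q → ℝ) (hη : ∀ j, η j ∈ Set.Icc (0 : ℝ) m)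
    (hsum : ∑ j, η j = m * p)
    (μ : Measure (EuclideanSpace ℝ (Fin q))) [IsFiniteMeasure μ]
    (hinv : ∀ g : EuclideanSpace ℝ (Fin q) ≃ₗᵢ[ℝ] EuclideanSpace ℝ (Fin q), μ.map g = μ)
    (hsphere : μ (Metric.sphere (0 : EuclideanSpace ℝ (Fin q)) 1)ᶜ = 0) :
    ∫ x, (∑ j, η j * (x j) ^ 2) ^ ((m : ℝ) / 2) ∂μ
      ≤ ∫ x, (∑ j : Fin q, (if (j : ℕ) < p then (m : ℝ) else 0) * (x j) ^ 2)
          ^ ((m : ℝ) / 2) ∂μ := by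
  exact key_induction μ m p hm hp hinv hsphere
    ((Finset.univ.filter (fun j => η j ≠ 0 ∧ η j ≠ (m : ℝ))).card) η le_rfl hη hsum
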